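/- If f : ℝⁿ → ℝ is differentiable and satisfies |f(y) - f(x) - ⟨∇f(x), y - x⟩| ≤ (L/2)‖y - x‖² for all x, y, then its gradient is L-Lipschitz: ‖∇f(x) - ∇f(y)‖ ≤ L‖x - y‖ for all x, y. -/

import Mathlib

lemma key_cocoercive {E : Type*} [NormedAddCommGroup E] [InnerProductSpace ℝ E]
    (L : ℝ) (hLpos : 0 < L) (g h x y u v : E) (fx fy fu fv : ℝ)
    (hu : u = y - (2*L)⁻¹ • (L • (y-x) - (g-h)))
    (hv : v = y - (2*L)⁻¹ • (L • (y-x) + (g-h)))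
    (H1 : |fu - fx - (inner ℝ g (u-x) : ℝ)| ≤ L/2 * ‖u-x‖^2)
    (H2 : |fu - fy - (inner ℝ h (u-y) : ℝ)| ≤ L/2 * ‖u-y‖^2)
    (H3 : |fv - fx - (inner ℝ g (v-x) : ℝ)| ≤ L/2 * ‖v-x‖^2)
    (H4 : |fv - fy - (inner ℝ h (v-y) : ℝ)| ≤ L/2 * ‖v-y‖^2) :
    ‖g - h‖ ≤ L * ‖x - y‖ := by
  have hLne : L ≠ 0 := ne_of_gt hLpos
  obtain ⟨s, hs⟩ : ∃ s, s = L • (y-x) + (g-h) := ⟨_, rfl⟩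
  obtain ⟨t, ht⟩ : ∃ t, t = L • (y-x) - (g-h) := ⟨_, rfl⟩
  have hux : u - x = (2*L)⁻¹ • s := by
    rw [hu, hs]; match_scalars <;> field_simp <;> ring
  have huy : u - y = -((2*L)⁻¹ • t) := by rw [hu, ht]; abel
  have hvx : v - x = (2*L)⁻¹ • t := by
    rw [hv, ht]; match_scalars <;> field_simp <;> ring
  have hvy : v - y = -((2*L)⁻¹ • s) := by rw [hv, hs]; abel
  have hcn : ‖(2*L)⁻¹‖ = (2*L)⁻¹ := by
    rw [Real.norm_eq_abs, abs_of_pos (by positivity)]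
  rw [hux, inner_smul_right, norm_smul, hcn] at H1
  rw [huy, inner_neg_right, inner_smul_right, norm_neg, norm_smul, hcn] at H2
  rw [hvx, inner_smul_right, norm_smul, hcn] at H3
  rw [hvy, inner_neg_right, inner_smul_right, norm_neg, norm_smul, hcn] at H4
  have A1 := (abs_le.mp H1).1
  have A2 := (abs_le.mp H2).2
  have A3 := (abs_le.mp H3).2
  have A4 := (abs_le.mp H4).1
  have hst : (inner ℝ g s : ℝ) - inner ℝ g t + inner ℝ h t - inner ℝ h s = 2*‖g-h‖^2 := by
    have h5 : s - t = (2:ℝ) • (g-h) := by rw [hs, ht]; module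
    have h6 : (inner ℝ (g-h) (s-t) : ℝ) = 2*‖g-h‖^2 := by
      rw [h5, inner_smul_right, real_inner_self_eq_norm_sq]
    rw [inner_sub_left, inner_sub_right, inner_sub_right] at h6
    linarith
  have hst' : (2*L)⁻¹ * ((inner ℝ g s : ℝ) - inner ℝ g t + inner ℝ h t - inner ℝ h s)
      = (2*L)⁻¹ * (2*‖g-h‖^2) := by rw [hst]
  have hnst : ‖s‖^2 + ‖t‖^2 = 2*(L^2*‖y-x‖^2) + 2*‖g-h‖^2 := by
    have e1 : ‖s‖^2 = ‖L•(y-x)‖^2 + 2*(inner ℝ (L•(y-x)) (g-h):ℝ) + ‖g-h‖^2 := by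
      rw [hs]; exact norm_add_sq_real _ _
    have e2 : ‖t‖^2 = ‖L•(y-x)‖^2 - 2*(inner ℝ (L•(y-x)) (g-h):ℝ) + ‖g-h‖^2 := by
      rw [ht]; exact norm_sub_sq_real _ _
    have e3 : ‖L•(y-x)‖^2 = L^2*‖y-x‖^2 := by
      rw [norm_smul, Real.norm_eq_abs, mul_pow, sq_abs]
    linarith
  have final_eq : L/2 * ((2*L)⁻¹ * ‖s‖)^2 + L/2 * ((2*L)⁻¹ * ‖t‖)^2
      = (2*L)⁻¹ * (L^2*‖y-x‖^2) / 2 + (2*L)⁻¹ * ‖g-h‖^2 / 2 := by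
    have : L/2 * ((2*L)⁻¹ * ‖s‖)^2 + L/2 * ((2*L)⁻¹ * ‖t‖)^2
        = L/2 * ((2*L)⁻¹)^2 * (‖s‖^2 + ‖t‖^2) := by ring
    rw [this, hnst]; field_simp
  have step : (2*L)⁻¹ * ‖g-h‖^2 ≤ (2*L)⁻¹ * (L^2*‖y-x‖^2) := by
    linarith [A1, A2, A3, A4, hst', final_eq]
  have hA : ‖g-h‖^2 ≤ L^2*‖y-x‖^2 :=
    (mul_le_mul_iff_right₀ (show (0:ℝ) < (2*L)⁻¹ by positivity)).mp step
  rw [norm_sub_rev y x] at hA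
  nlinarith [norm_nonneg (g-h), mul_nonneg hLpos.le (norm_nonneg (x-y)), hA]

theorem stmt_1 {n : ℕ} (f : EuclideanSpace ℝ (Fin n) → ℝ) (L : ℝ) (hL : 0 ≤ L)
    (hf : Differentiable ℝ f)
    (hsmooth : ∀ x y, |f y - f x - (inner ℝ (gradient f x) (y - x) : ℝ)| ≤ L / 2 * ‖y - x‖ ^ 2) :
    ∀ x y, ‖gradient f x - gradient f y‖ ≤ L * ‖x - y‖ := by
  intro x y
  rcases eq_or_lt_of_le hL with hL0 | hLpos
  · -- L = 0 : f is affine, gradient constant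
    have hE : ∀ a b, f b - f a - (inner ℝ (gradient f a) (b - a) : ℝ) = 0 := by
      intro a b
      have h1 := hsmooth a b
      rw [← hL0] at h1
      have h0 : |f b - f a - (inner ℝ (gradient f a) (b - a) : ℝ)| ≤ 0 := by linarith
      exact abs_eq_zero.mp (le_antisymm h0 (abs_nonneg _))
    have key0 : (inner ℝ (gradient f x - gradient f y) (gradient f x - gradient f y) : ℝ) = 0 := by
      have c1 := hE x (y + (gradient f x - gradient f y))
      have c2 := hE y (y + (gradient f x - gradient f y))
      have c3 := hE x y
      have hzx : (y + (gradient f x - gradient f y)) - x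
          = (y - x) + (gradient f x - gradient f y) := by abel
      have hzy : (y + (gradient f x - gradient f y)) - y
          = gradient f x - gradient f y := by abel
      rw [hzx, inner_add_right] at c1
      rw [hzy] at c2
      rw [inner_sub_left]
      linarith
    have hz : gradient f x - gradient f y = 0 := by
      rwa [inner_self_eq_zero] at key0
    rw [hz, norm_zero, ← hL0]
    simp [norm_nonneg]
  · exact key_cocoercive L hLpos (gradient f x) (gradient f y) x y _ _
      (f x) (f y) (f _) (f _) rfl rfl
      (hsmooth x _) (hsmooth y _) (hsmooth x _) (hsmooth y _)
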